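/- Let α = [0;1+d₁,\overline{d₂,…,dₙ}] be a Sturm number of type (i) with d₁ = 1 (so dₙ ≥ 1), and let σ be its associated standard morphism. Then for every integer m ≥ 1, dₙ = d_{m(n−1)+1} and σ^m(b) = s_{m(n−1)}^{d_{m(n−1)+1}−d₁} s_{m(n−1)−1}, and the adjoining singular word of index m(n−1)−1 satisfies v_{m(n−1)−1} = a·σ^m(b)·b⁻¹ if m(n−1)−1 is odd, and v_{m(n−1)−1} = b·σ^m(b)·a⁻¹ if m(n−1)−1 is even. -/
import Mathlib


/-- The two-letter alphabet 𝒜 = {a, b}. -/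
inductive AB : Type
  | a : AB
  | b : AB
deriving DecidableEq, Repr

/-- Apply a morphism (determined by its images on the letters) to a finite word. -/
def applyM (g : AB → List AB) (w : List AB) : List AB := w.flatMap g

/-- The exchange morphism E : a ↦ b, b ↦ a. -/
def Em : AB → List AB
  | AB.a => [AB.b]
  | AB.b => [AB.a]

/-- The morphism φ : a ↦ ab, b ↦ a. -/
def phim : AB → List AB
  | AB.a => [AB.a, AB.b]
  | AB.b => [AB.a]

/-- Composition of morphisms: `compM g h` applies `h` first, then `g`. -/
def compM (g h : AB → List AB) : AB → List AB := fun c => applyM g (h c)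

/-- Powers of a morphism. -/
def mpow (g : AB → List AB) : ℕ → AB → List AB
  | 0 => fun c => [c]
  | n + 1 => compM g (mpow g n)

/-- A morphism is standard iff it is a composition of E and φ (in any number and order). -/
inductive IsStandard : (AB → List AB) → Prop
  | id : IsStandard (fun c => [c])
  | compE {ψ : AB → List AB} : IsStandard ψ → IsStandard (compM ψ Em)
  | compPhi {ψ : AB → List AB} : IsStandard ψ → IsStandard (compM ψ phim)

/-- `IsRightConj ψ ξ k` : ξ is the k-th right conjugate of ψ, i.e. there is a word u
of length k with ψ(w)u = uξ(w) for all finite words w. -/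
def IsRightConj (ψ ξ : AB → List AB) (k : ℕ) : Prop :=
  ∃ u : List AB, u.length = k ∧ ∀ w : List AB, applyM ψ w ++ u = u ++ applyM ξ w

/-- w^k (power of a finite word under concatenation). -/
def lpow (w : List AB) : ℕ → List AB
  | 0 => []
  | k + 1 => w ++ lpow w k

/-- Standard sequence associated with a directive sequence (d₁, d₂, …) (here `d`
is indexed so that `d i` is dᵢ for i ≥ 1): `sseq d 0 = s₋₁ = b`, `sseq d (n+1) = sₙ`,
with s₀ = a and sₙ = sₙ₋₁^{dₙ} sₙ₋₂. -/
def sseq (d : ℕ → ℕ) : ℕ → List AB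
  | 0 => [AB.b]
  | 1 => [AB.a]
  | n + 2 => lpow (sseq d (n + 1)) (d (n + 1)) ++ sseq d n

/-- Convergent denominators: `qseq d n` = qₙ = |sₙ| (q₀ = 1, q₁ = 1 + d₁,
qₙ = dₙqₙ₋₁ + qₙ₋₂). -/
def qseq (d : ℕ → ℕ) : ℕ → ℕ
  | 0 => 1
  | 1 => 1 + d 1
  | n + 2 => d (n + 2) * qseq d (n + 1) + qseq d n

/-- `PrefInf u x` : the finite word u is a prefix of the infinite word x. -/
def PrefInf (u : List AB) (x : ℕ → AB) : Prop :=
  ∀ i, i < u.length → u.getD i AB.a = x i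

/-- Image of an infinite word under a (non-erasing) morphism, letter by letter. -/
def applyInf (g : AB → List AB) (x : ℕ → AB) : ℕ → AB :=
  fun i => (applyM g ((List.range (i + 1)).map x)).getD i AB.a

/-- `IsProdInf u x` : the infinite word x is the infinite product u 0 · u 1 · u 2 ⋯,
i.e. every finite partial product is a prefix of x. -/
def IsProdInf (u : ℕ → List AB) (x : ℕ → AB) : Prop :=
  ∀ n, PrefInf (((List.range n).map u).flatten) x

/-- Adjoining singular words: `vword d k` is the adjoining singular word v_{k-1}
(so `vword d 0 = v₋₁`), where vₙ = a·sₙ₊₁^{d_{n+2}−1}sₙ·b⁻¹ for n odd and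
vₙ = b·sₙ₊₁^{d_{n+2}−1}sₙ·a⁻¹ for n even. -/
def vword (d : ℕ → ℕ) (k : ℕ) : List AB :=
  (if k % 2 = 0 then AB.a else AB.b) ::
    (lpow (sseq d (k + 1)) (d (k + 1) - 1) ++ sseq d k).dropLast

/-- Singular words: `wword d k` is the singular word w_{k-2}
(w₋₂ = ε, w₋₁ = a, w₀ = b, and wₙ = a·sₙ·b⁻¹ for n ≥ 1 odd, wₙ = b·sₙ·a⁻¹ for n even). -/
def wword (d : ℕ → ℕ) : ℕ → List AB
  | 0 => []
  | 1 => [AB.a]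
  | 2 => [AB.b]
  | k + 3 =>
      (if (k + 1) % 2 = 1 then AB.a else AB.b) :: (sseq d (k + 2)).dropLast

/-- The standard morphism σ associated with a type (i) Sturm number
α = [0;1+d₁,\overline{d₂,…,dₙ}] : σ(a) = sₙ₋₁, σ(b) = sₙ₋₁^{dₙ−d₁} sₙ₋₂. -/
def sigmaGen (d : ℕ → ℕ) (n : ℕ) : AB → List AB
  | AB.a => sseq d n
  | AB.b => lpow (sseq d n) (d n - d 1) ++ sseq d (n - 1)

/-- The directive sequence of α = [0;2,\overline{r}] : d₁ = 1, dᵢ = r for i ≥ 2. -/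
def dseq (r : ℕ) : ℕ → ℕ := fun i => if i ≤ 1 then 1 else r

/-- The directive sequence of 1 − α = [0;1,d₁,\overline{d₂,…,dₙ}] obtained from that of
α = [0;1+d₁,\overline{d₂,…,dₙ}] : ê₁ = 0 and êᵢ = dᵢ₋₁ for i ≥ 2. -/
def dhat (d : ℕ → ℕ) : ℕ → ℕ := fun i => if i ≤ 1 then 0 else d (i - 1)

/-- `Generates ψ c x` : ψ is prolongable on the letter c and x = ψ^ω(c), i.e. every
ψ^m(c) is a prefix of x. -/
def Generates (ψ : AB → List AB) (c : AB) (x : ℕ → AB) : Prop :=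
  (∃ w : List AB, w ≠ [] ∧ ψ c = c :: w) ∧ ∀ m, PrefInf (mpow ψ m c) x

/-- Fibonacci numbers, shifted: `fibw k = F_{k-1}`, so fibw 0 = F₋₁ = 1,
fibw 1 = F₀ = 1, Fₙ = Fₙ₋₁ + Fₙ₋₂. -/
def fibw : ℕ → ℕ
  | 0 => 1
  | 1 => 1
  | n + 2 => fibw (n + 1) + fibw n

/-- `HasCF γ a` : γ has continued fraction expansion [0; a 1, a 2, a 3, …]. -/
def HasCF (γ : ℝ) (a : ℕ → ℕ) : Prop :=
  ∃ x : ℕ → ℝ, x 0 = γ ∧ (∀ i, 0 < x i ∧ x i < 1) ∧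
    ∀ i, 1 / x i = (a (i + 1) : ℝ) + x (i + 1)

/-- γ has a continued fraction expansion of type (i):
γ = [0;1+d₁,\overline{d₂,…,dₙ}] < 1/2 with dₙ ≥ d₁ ≥ 1. -/
def CFTypeI (γ : ℝ) : Prop :=
  ∃ a : ℕ → ℕ, HasCF γ a ∧ γ < 1 / 2 ∧
    ∃ n : ℕ, 2 ≤ n ∧ ∃ d : ℕ → ℕ,
      (∀ i, 1 ≤ i → 1 ≤ d i) ∧ a 1 = 1 + d 1 ∧ (∀ i, 2 ≤ i → a i = d i) ∧
      (∀ i, 2 ≤ i → d (i + (n - 1)) = d i) ∧ d 1 ≤ d n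

/-- γ has a continued fraction expansion of type (ii):
γ = [0;1,d₁,\overline{d₂,…,dₙ}] > 1/2 with dₙ ≥ d₁. -/
def CFTypeII (γ : ℝ) : Prop :=
  ∃ a : ℕ → ℕ, HasCF γ a ∧ 1 / 2 < γ ∧
    ∃ n : ℕ, 2 ≤ n ∧ ∃ d : ℕ → ℕ,
      (∀ i, 1 ≤ i → 1 ≤ d i) ∧ a 1 = 1 ∧ (∀ i, 2 ≤ i → a i = d (i - 1)) ∧
      (∀ i, 2 ≤ i → d (i + (n - 1)) = d i) ∧ d 1 ≤ d n

/-- A Sturm number: an irrational γ ∈ (0,1) whose continued fraction expansion is of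
type (i) or type (ii). -/
def IsSturmNumber (γ : ℝ) : Prop :=
  Irrational γ ∧ 0 < γ ∧ γ < 1 ∧ (CFTypeI γ ∨ CFTypeII γ)

lemma applyM_append (g : AB → List AB) (u v : List AB) :
    applyM g (u ++ v) = applyM g u ++ applyM g v := by
  simp [applyM]

lemma applyM_lpow (g : AB → List AB) (w : List AB) (k : ℕ) :
    applyM g (lpow w k) = lpow (applyM g w) k := by
  induction k with
  | zero => simp [lpow, applyM]
  | succ k ih => simp [lpow, applyM_append, ih]

lemma lpow_pred (w : List AB) (j : ℕ) (hj : 1 ≤ j) :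
    lpow w j = w ++ lpow w (j - 1) := by
  obtain ⟨j, rfl⟩ : ∃ j', j = j' + 1 := ⟨j - 1, by omega⟩
  rfl

lemma mpow_succ_apply (g : AB → List AB) (m : ℕ) (c : AB) :
    mpow g (m + 1) c = applyM g (mpow g m c) := rfl

section key
variable (d : ℕ → ℕ) (p : ℕ)
  (hper : ∀ i, 2 ≤ i → d (i + (p + 1)) = d i)
  (hd1 : d 1 = 1) (hdn : 1 ≤ d (p + 2))

include hper hd1 hdn in
lemma sigma_sseq : ∀ k, applyM (sigmaGen d (p + 2)) (sseq d (k + 1)) = sseq d (k + p + 2) := by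
  intro k
  induction k using Nat.strong_induction_on with
  | _ k ih =>
    match k with
    | 0 => simp [sseq, applyM, sigmaGen]
    | 1 =>
        have e : 1 + p + 2 = p + 3 := by omega
        rw [show (1 : ℕ) + 1 = 2 from rfl, e]
        have h2 : sseq d 2 = lpow (sseq d 1) (d 1) ++ sseq d 0 := rfl
        have h3 : sseq d (p + 3) = lpow (sseq d (p + 2)) (d (p + 2)) ++ sseq d (p + 1) := rfl
        rw [h2, h3, hd1, lpow_pred _ _ hdn]
        simp [sseq, lpow, applyM, sigmaGen, hd1]
    | k + 2 =>
        have h2 : sseq d (k + 2 + 1) =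
            lpow (sseq d (k + 1 + 1)) (d (k + 1 + 1)) ++ sseq d (k + 1) := rfl
        have e : k + 2 + p + 2 = (k + p + 2) + 2 := by omega
        have h3 : sseq d ((k + p + 2) + 2) =
            lpow (sseq d (k + p + 2 + 1)) (d (k + p + 2 + 1)) ++ sseq d (k + p + 2) := rfl
        have hdk : d (k + p + 2 + 1) = d (k + 1 + 1) := by
          have h := hper (k + 2) (by omega)
          have e2 : k + 2 + (p + 1) = k + p + 2 + 1 := by omega
          rw [e2] at h; exact h
        have e3 : k + 1 + p + 2 = k + p + 2 + 1 := by omega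
        rw [e, h3, h2, applyM_append, applyM_lpow, hdk,
          ih (k + 1) (by omega), ih k (by omega), e3]

include hper hd1 hdn in
lemma sigma_pow_b : ∀ m : ℕ, mpow (sigmaGen d (p + 2)) (m + 1) AB.b =
    lpow (sseq d (m * (p + 1) + p + 2)) (d (p + 2) - 1)
      ++ sseq d (m * (p + 1) + p + 1) := by
  intro m
  induction m with
  | zero =>
      show applyM (sigmaGen d (p + 2)) (mpow (sigmaGen d (p + 2)) 0 AB.b) = _
      simp [mpow, applyM, sigmaGen, hd1]
  | succ m ih =>
      rw [mpow_succ_apply, ih, applyM_append, applyM_lpow]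
      have e1 : m * (p + 1) + p + 2 = (m * (p + 1) + p + 1) + 1 := by omega
      have e2 : m * (p + 1) + p + 1 = (m * (p + 1) + p) + 1 := by omega
      rw [e1, e2, sigma_sseq d p hper hd1 hdn, sigma_sseq d p hper hd1 hdn]
      have e3 : m * (p + 1) + p + 1 + p + 2 = (m + 1) * (p + 1) + p + 2 := by ring
      have e4 : m * (p + 1) + p + p + 2 = (m + 1) * (p + 1) + p + 1 := by ring
      rw [e3, e4]

include hper in
lemma d_per_pow : ∀ m : ℕ, d (m * (p + 1) + p + 2) = d (p + 2) := by
  intro m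
  induction m with
  | zero => simp
  | succ m ih =>
      have := hper (m * (p + 1) + p + 2) (by omega)
      have e : m * (p + 1) + p + 2 + (p + 1) = (m + 1) * (p + 1) + p + 2 := by ring
      rw [e] at this
      rw [this, ih]
end key

/-- For a type (i) Sturm number α = [0;1+d₁,\overline{d₂,…,dₙ}] with
d₁ = 1, for every m ≥ 1: dₙ = d_{m(n−1)+1},
σ^m(b) = s_{m(n−1)}^{d_{m(n−1)+1}−d₁} s_{m(n−1)−1}, and
v_{m(n−1)−1} = a·σ^m(b)·b⁻¹ if m(n−1)−1 is odd, b·σ^m(b)·a⁻¹ if m(n−1)−1 is even.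
(Recall `sseq d (k+1)` is sₖ and `vword d k` is v_{k−1}.) -/
theorem statement19 (n : ℕ) (hn : 2 ≤ n) (d : ℕ → ℕ)
    (hd : ∀ i, 1 ≤ i → 1 ≤ d i)
    (hper : ∀ i, 2 ≤ i → d (i + (n - 1)) = d i)
    (hd1 : d 1 = 1) (hdn : d 1 ≤ d n) :
    ∀ m : ℕ, 1 ≤ m →
      d n = d (m * (n - 1) + 1) ∧
      mpow (sigmaGen d n) m AB.b =
        lpow (sseq d (m * (n - 1) + 1)) (d (m * (n - 1) + 1) - d 1)
          ++ sseq d (m * (n - 1)) ∧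
      vword d (m * (n - 1)) =
        (if (m * (n - 1) - 1) % 2 = 1 then AB.a else AB.b) ::
          (mpow (sigmaGen d n) m AB.b).dropLast := by
  obtain ⟨p, rfl⟩ : ∃ p, n = p + 2 := ⟨n - 2, by omega⟩
  have hper' : ∀ i, 2 ≤ i → d (i + (p + 1)) = d i := by
    intro i hi; have := hper i hi; simpa using this
  have hdn' : 1 ≤ d (p + 2) := le_trans (by omega) hdn
  intro m hm
  obtain ⟨m', rfl⟩ : ∃ m'', m = m'' + 1 := ⟨m - 1, by omega⟩
  have hsub : p + 2 - 1 = p + 1 := rfl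
  have hmul : (m' + 1) * (p + 1) = m' * (p + 1) + p + 1 := by ring
  have hdper := d_per_pow d p hper' m'
  have hde : d ((m' + 1) * (p + 1) + 1) = d (p + 2) := by
    rw [hmul]; convert hdper using 2
  have hpow := sigma_pow_b d p hper' hd1 hdn' m'
  constructor
  · rw [hsub, hde]
  constructor
  · rw [hsub, hde, hd1, hpow, hmul]
  · rw [hsub]
    show vword d ((m' + 1) * (p + 1)) = _
    rw [vword, hpow, hde, hmul]
    have e1 : m' * (p + 1) + p + 1 + 1 = m' * (p + 1) + p + 2 := by omega
    rw [e1]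
    congr 1
    split_ifs with h1 h2 h3 <;> first | rfl | omega
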